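/- Assume h > 0 > ℓ, α > 0, σ > 0, and ℓ^† < kα < h^†. Then Q₁(1) < Q₂(1), lim_{β→∞} Q₁(β) = ((γ−1)/(γ+1))·(−ℓ/h) > 0, and lim_{β→∞} Q₂(β) = 0. -/
import Mathlib


open Real Filter

/-- Under `h > 0 > ℓ`, `α > 0`, `σ > 0`, `ℓ† < kα < h†`: `Q₁(1) < Q₂(1)`,
`Q₁(β) → ((γ-1)/(γ+1))·(-ℓ/h) > 0` as `β → ∞`, and `Q₂(β) → 0` as `β → ∞`. -/
theorem stmt_9 (h ℓ σ α γ hd ld k : ℝ) (hh : 0 < h) (hℓ : ℓ < 0) (hσ : 0 < σ) (hα : 0 < α)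
    (hγ : γ = Real.sqrt (1 + 8 * α * σ ^ 2 / (h - ℓ) ^ 2))
    (hld : ld < k * α) (hhd : k * α < hd)
    (Q₁ Q₂ : ℝ → ℝ)
    (hQ₁ : ∀ β : ℝ, Q₁ β = ((γ - 1) / (γ + 1)) *
      ((-ℓ - (ld - k * α) * β ^ (-((γ + 1) / 2))) / (h + (hd - k * α) * β ^ ((1 - γ) / 2))))
    (hQ₂ : ∀ β : ℝ, Q₂ β = ((γ + 1) / (γ - 1)) *
      ((-ℓ - (ld - k * α) * β ^ ((γ - 1) / 2)) / (h + (hd - k * α) * β ^ ((γ + 1) / 2)))) :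
    Q₁ 1 < Q₂ 1 ∧
    Tendsto Q₁ atTop (nhds (((γ - 1) / (γ + 1)) * (-ℓ / h))) ∧
    0 < ((γ - 1) / (γ + 1)) * (-ℓ / h) ∧
    Tendsto Q₂ atTop (nhds 0) := by
  have hγ1 : 1 < γ := by
    rw [hγ]
    have h1 : (0:ℝ) < 8 * α * σ ^ 2 / (h - ℓ) ^ 2 :=
      div_pos (by positivity) (pow_pos (by linarith) 2)
    nlinarith [Real.sq_sqrt (by linarith : (0:ℝ) ≤ 1 + 8 * α * σ ^ 2 / (h - ℓ) ^ 2),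
      Real.sqrt_nonneg (1 + 8 * α * σ ^ 2 / (h - ℓ) ^ 2)]
  have hA : ld - k * α < 0 := by linarith
  have hB : 0 < hd - k * α := by linarith
  have hq1 : Q₁ 1 < Q₂ 1 := by
    rw [hQ₁ 1, hQ₂ 1]
    simp only [Real.one_rpow]
    have hR : 0 < (-ℓ - (ld - k * α) * 1) / (h + (hd - k * α) * 1) := by
      apply div_pos <;> linarith
    have hc : (γ - 1) / (γ + 1) < (γ + 1) / (γ - 1) := by
      rw [div_lt_div_iff₀ (by linarith) (by linarith)]
      nlinarith
    exact mul_lt_mul_of_pos_right hc hR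
  have hb : (0:ℝ) < (γ + 1) / 2 := by linarith
  have ha : (0:ℝ) < (γ - 1) / 2 := by linarith
  have t1 : Tendsto (fun β : ℝ => β ^ (-((γ + 1) / 2))) atTop (nhds 0) :=
    tendsto_rpow_neg_atTop hb
  have t2 : Tendsto (fun β : ℝ => β ^ ((1 - γ) / 2)) atTop (nhds 0) := by
    have : (1 - γ) / 2 = -((γ - 1) / 2) := by ring
    rw [this]; exact tendsto_rpow_neg_atTop ha
  have hlim1 : Tendsto Q₁ atTop (nhds (((γ - 1) / (γ + 1)) * (-ℓ / h))) := by
    have : Tendsto (fun β : ℝ => ((γ - 1) / (γ + 1)) *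
        ((-ℓ - (ld - k * α) * β ^ (-((γ + 1) / 2))) / (h + (hd - k * α) * β ^ ((1 - γ) / 2))))
        atTop (nhds (((γ - 1) / (γ + 1)) * ((-ℓ - (ld - k * α) * 0) / (h + (hd - k * α) * 0)))) := by
      apply Tendsto.const_mul
      exact Tendsto.div ((tendsto_const_nhds).sub ((tendsto_const_nhds).mul t1))
        ((tendsto_const_nhds).add ((tendsto_const_nhds).mul t2)) (by simp; linarith)
    simp only [mul_zero, sub_zero, add_zero] at this
    exact Tendsto.congr (fun β => (hQ₁ β).symm) this
  have hpos : 0 < ((γ - 1) / (γ + 1)) * (-ℓ / h) := by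
    apply mul_pos (div_pos (by linarith) (by linarith)) (div_pos (by linarith) hh)
  have hlim2 : Tendsto Q₂ atTop (nhds 0) := by
    have key : ∀ᶠ β : ℝ in atTop, Q₂ β = ((γ + 1) / (γ - 1)) *
        ((-ℓ * β ^ (-((γ + 1) / 2)) - (ld - k * α) * β ^ (-(1:ℝ))) /
          (h * β ^ (-((γ + 1) / 2)) + (hd - k * α))) := by
      filter_upwards [eventually_gt_atTop (0:ℝ)] with β hβ
      rw [hQ₂ β]
      have hne : β ^ (-((γ + 1) / 2)) ≠ 0 := (Real.rpow_pos_of_pos hβ _).ne'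
      congr 1
      have e1 : β ^ ((γ - 1) / 2) * β ^ (-((γ + 1) / 2)) = β ^ (-(1:ℝ)) := by
        rw [← Real.rpow_add hβ]
        congr 1
        ring
      have e2 : β ^ ((γ + 1) / 2) * β ^ (-((γ + 1) / 2)) = 1 := by
        rw [← Real.rpow_add hβ]
        norm_num
      have e3 : β ^ (-(1:ℝ)) * β ^ ((γ + 1) / 2) = β ^ ((γ - 1) / 2) := by
        rw [← Real.rpow_add hβ]
        congr 1
        ring
      rw [div_eq_div_iff]
      · linear_combination (-(ld - k * α) * h) * e1 + ℓ * (hd - k * α) * e2 +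
          (ld - k * α) * (hd - k * α) * e3
      · have := Real.rpow_pos_of_pos hβ ((γ + 1) / 2); positivity
      · have := Real.rpow_pos_of_pos hβ (-((γ + 1) / 2)); positivity
    have t3 : Tendsto (fun β : ℝ => β ^ (-(1:ℝ))) atTop (nhds 0) :=
      tendsto_rpow_neg_atTop one_pos
    have : Tendsto (fun β : ℝ => ((γ + 1) / (γ - 1)) *
        ((-ℓ * β ^ (-((γ + 1) / 2)) - (ld - k * α) * β ^ (-(1:ℝ))) /
          (h * β ^ (-((γ + 1) / 2)) + (hd - k * α))))
        atTop (nhds (((γ + 1) / (γ - 1)) * ((-ℓ * 0 - (ld - k * α) * 0) / (h * 0 + (hd - k * α))))) := by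
      apply Tendsto.const_mul
      exact Tendsto.div (((tendsto_const_nhds).mul t1).sub ((tendsto_const_nhds).mul t3))
        (((tendsto_const_nhds).mul t1).add tendsto_const_nhds) (by simp; linarith)
    simp only [mul_zero, sub_zero, zero_add, zero_div] at this
    exact Tendsto.congr' (key.mono fun _ e => e.symm) this
  exact ⟨hq1, hlim1, hpos, hlim2⟩
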